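/- Let P be a finite poset. For every order ideal I ∈ J(P), the probability μ_{m,<}(I) converges to μ_lin(I) as m → ∞; that is, the strict distributions μ_{m,<} converge pointwise to the linear distribution μ_lin. -/

import Mathlib

open Finset
open scoped Classical

noncomputable section

variable {α : Type*} [Fintype α] [PartialOrder α]

/-- `I` is an order ideal (down-set) of the finite poset `α`. -/
def IsIdeal (I : Finset α) : Prop := ∀ p ∈ I, ∀ q : α, q ≤ p → q ∈ I

/-- The set `J(P)` of all order ideals of the finite poset `α`. -/
def idealsFinset (α : Type*) [Fintype α] [PartialOrder α] : Finset (Finset α) :=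
  Finset.univ.filter fun I => IsIdeal I

/-- `p` can be toggled in to the order ideal `I`. -/
def CanToggleIn (I : Finset α) (p : α) : Prop := p ∉ I ∧ IsIdeal (insert p I)

/-- `p` can be toggled out of the order ideal `I`. -/
def CanToggleOut (I : Finset α) (p : α) : Prop := p ∈ I ∧ IsIdeal (I.erase p)

/-- The jaggedness of `I`: the number of elements that can be toggled in,
plus the number of elements that can be toggled out. -/
def jag (I : Finset α) : ℕ :=
  (Finset.univ.filter fun p => CanToggleIn I p).card +
  (Finset.univ.filter fun p => CanToggleOut I p).card

/-- The probability, under `μ`, that a random order ideal satisfies `E`. -/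
def prIdeal (μ : Finset α → ℝ) (E : Finset α → Prop) : ℝ :=
  ∑ I ∈ (idealsFinset α).filter E, μ I

/-- `μ` is toggle-symmetric: for every `p`, the probability that `p` can be toggled in
equals the probability that `p` can be toggled out. -/
def ToggleSymmetric (μ : Finset α → ℝ) : Prop :=
  ∀ p : α, prIdeal μ (fun I => CanToggleIn I p) = prIdeal μ (fun I => CanToggleOut I p)

/-- `μ` is a probability distribution on `J(P)`. -/
def IsProbDist (μ : Finset α → ℝ) : Prop :=
  (∀ I, 0 ≤ μ I) ∧ (∀ I, ¬ IsIdeal I → μ I = 0) ∧ (∑ I ∈ idealsFinset α, μ I = 1)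

/-- The expectation of the statistic `f` with respect to `μ`. -/
def expectStat (μ : Finset α → ℝ) (f : Finset α → ℝ) : ℝ :=
  ∑ I ∈ idealsFinset α, μ I * f I

/-- The linear extensions of `α`: order-preserving bijections `α ≃ {1,…,n}`. -/
def linExts (α : Type*) [Fintype α] [PartialOrder α] :
    Finset (α ≃ Fin (Fintype.card α)) :=
  Finset.univ.filter fun e => ∀ p q : α, p ≤ q → e p ≤ e q

/-- The linear distribution `μ_lin` on `J(P)`: the distribution of `ℓ⁻¹({1,…,k})` for a
uniformly random linear extension `ℓ` and uniform `k ∈ {0,1,…,n}`. -/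
def muLin (α : Type*) [Fintype α] [PartialOrder α] (I : Finset α) : ℝ :=
  (∑ e ∈ linExts α, ∑ k ∈ Finset.range (Fintype.card α + 1),
      if Finset.univ.filter (fun p => (e p : ℕ) < k) = I then (1 : ℝ) else 0) /
    ((linExts α).card * (Fintype.card α + 1))

/-- Strict reverse `P`-partitions of height `m`: maps `α → {0,1,…,m}` that are strictly
order-preserving. -/
def srpp (α : Type*) [Fintype α] [PartialOrder α] (m : ℕ) : Finset (α → Fin (m + 1)) :=
  Finset.univ.filter fun ℓ => ∀ p q : α, p < q → ℓ p < ℓ q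

/-- The rank of the poset `α`: the maximum length (number of elements minus one) of a
chain of `α`. -/
def posetRank (α : Type*) [Fintype α] [PartialOrder α] : ℕ :=
  Finset.sup
    (Finset.univ.filter fun C : Finset α => IsChain (· ≤ ·) (C : Set α))
    (fun C : Finset α => C.card - 1)

/-- The strict distribution `μ_{m,<}` on `J(P)`: the distribution of `ℓ⁻¹({0,…,k−1})` for a
uniformly random strict reverse `P`-partition `ℓ` of height `m` and uniform
`k ∈ {0,1,…,m+1}`. -/
def muStrict (α : Type*) [Fintype α] [PartialOrder α] (m : ℕ) (I : Finset α) : ℝ :=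
  (∑ ℓ ∈ srpp α m, ∑ k ∈ Finset.range (m + 2),
      if Finset.univ.filter (fun p => (ℓ p : ℕ) < k) = I then (1 : ℝ) else 0) /
    ((srpp α m).card * (m + 2))

section AuxTest

lemma mem_srpp' {Q : Type*} [Fintype Q] [PartialOrder Q] {m : ℕ} {ℓ : Q → Fin (m+1)} :
    ℓ ∈ srpp Q m ↔ ∀ p q : Q, p < q → ℓ p < ℓ q := by
  simp [srpp]

lemma mem_linExts' {Q : Type*} [Fintype Q] [PartialOrder Q] {e : Q ≃ Fin (Fintype.card Q)} :
    e ∈ linExts Q ↔ ∀ p q : Q, p ≤ q → e p ≤ e q := by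
  simp [linExts]

lemma linExt_strict {Q : Type*} [Fintype Q] [PartialOrder Q] {e : Q ≃ Fin (Fintype.card Q)}
    (he : e ∈ linExts Q) {p q : Q} (h : p < q) : e p < e q :=
  lt_of_le_of_ne (mem_linExts'.1 he p q h.le) (fun hc => h.ne (e.injective hc))

lemma card_filter_val_lt (N a : ℕ) (ha : a ≤ N) :
    ((univ : Finset (Fin N)).filter fun y : Fin N => (y : ℕ) < a).card = a := by
  have h : ∀ x ∈ Finset.range a, x < N := fun x hx => lt_of_lt_of_le (Finset.mem_range.1 hx) ha
  have : ((univ : Finset (Fin N)).filter fun y : Fin N => (y : ℕ) < a)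
      = (Finset.range a).attachFin h := by
    ext y
    simp [Finset.mem_attachFin]
  rw [this, Finset.card_attachFin, Finset.card_range]

lemma card_filter_equiv_lt {β : Type*} [Fintype β] {N : ℕ} (E : β ≃ Fin N) (a : ℕ) (ha : a ≤ N) :
    ((univ : Finset β).filter fun x => (E x : ℕ) < a).card = a := by
  have := Finset.card_bij' (s := (univ : Finset β).filter fun x => (E x : ℕ) < a)
    (t := (univ : Finset (Fin N)).filter fun y : Fin N => (y : ℕ) < a)
    (fun x _ => E x) (fun y _ => E.symm y) ?_ ?_ ?_ ?_
  · rw [this, card_filter_val_lt N a ha]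
  · intro x hx; simpa using (Finset.mem_filter.1 hx).2
  · intro y hy; simpa using (Finset.mem_filter.1 hy).2
  · intro x _; simp
  · intro y _; simp

lemma linExts_nonempty (Q : Type*) [Fintype Q] [PartialOrder Q] : (linExts Q).Nonempty := by
  letI : Fintype (LinearExtension Q) := ‹Fintype Q›
  have hc : Fintype.card (LinearExtension Q) = Fintype.card Q := rfl
  refine ⟨((monoEquivOfFin (LinearExtension Q) hc).symm.toEquiv : Q ≃ Fin (Fintype.card Q)), ?_⟩
  apply mem_linExts'.2
  intro p q hpq
  exact (monoEquivOfFin (LinearExtension Q) hc).symm.monotone (toLinearExtension.monotone hpq)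

end AuxTest

section PStar

/-- The order of the augmented poset `P*`: `α` plus one new element sitting
above `I` and below `Iᶜ`. -/
def pstarLE (I : Finset α) : Option α → Option α → Prop
  | some p, some q => p ≤ q ∨ (p ∈ I ∧ q ∉ I)
  | some p, none => p ∈ I
  | none, some q => q ∉ I
  | none, none => True

def pstarOrder (I : Finset α) (hI : IsIdeal I) : PartialOrder (Option α) where
  le := pstarLE I
  lt x y := pstarLE I x y ∧ ¬ pstarLE I y x
  lt_iff_le_not_ge _ _ := Iff.rfl
  le_refl x := by cases x <;> simp [pstarLE]
  le_trans x y z hxy hyz := by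
    cases x with
    | none =>
      cases y with
      | none =>
        cases z with
        | none => trivial
        | some r => exact hyz
      | some q =>
        cases z with
        | none => trivial
        | some r =>
          intro hr
          rcases hyz with h | ⟨hq, hr'⟩
          · exact hxy (hI r hr q h)
          · exact hxy hq
    | some p =>
      cases y with
      | none =>
        cases z with
        | none => exact hxy
        | some r => exact Or.inr ⟨hxy, hyz⟩
      | some q =>
        cases z with
        | none =>
          rcases hxy with h | ⟨hp, _⟩
          · exact hI q hyz p h
          · exact hp
        | some r =>
          rcases hxy with h1 | ⟨hp, hq⟩
          · rcases hyz with h2 | ⟨hq2, hr⟩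
            · exact Or.inl (h1.trans h2)
            · exact Or.inr ⟨hI q hq2 p h1, hr⟩
          · rcases hyz with h2 | ⟨hq2, hr⟩
            · exact Or.inr ⟨hp, fun hr => hq (hI r hr q h2)⟩
            · exact absurd hq2 hq
  le_antisymm x y h1 h2 := by
    cases x with
    | none =>
      cases y with
      | none => rfl
      | some q => exact absurd (h2 : pstarLE I (some q) none) (h1 : pstarLE I none (some q))
    | some p =>
      cases y with
      | none => exact absurd h1 h2
      | some q =>
        rcases h1 with h1 | ⟨hp, hq⟩
        · rcases h2 with h2 | ⟨hq2, hp2⟩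
          · exact congrArg some (le_antisymm h1 h2)
          · exact absurd (hI q hq2 p h1) hp2
        · rcases h2 with h2 | ⟨hq2, _⟩
          · exact absurd (hI p hp q h2) hq
          · exact absurd hq2 hq

variable (I : Finset α) (hI : IsIdeal I)

lemma pstar_lt_some_none {p : α} (hp : p ∈ I) :
    (pstarOrder I hI).lt (some p) none := by
  letI := pstarOrder I hI
  rw [lt_iff_le_not_ge]
  exact ⟨hp, fun h => (h : pstarLE I none (some p)) hp⟩

lemma pstar_lt_none_some {q : α} (hq : q ∉ I) :
    (pstarOrder I hI).lt none (some q) := by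
  letI := pstarOrder I hI
  rw [lt_iff_le_not_ge]
  exact ⟨hq, fun h => hq (h : pstarLE I (some q) none)⟩

lemma pstar_lt_of_lt {p q : α} (h : p < q) :
    (pstarOrder I hI).lt (some p) (some q) := by
  letI := pstarOrder I hI
  rw [lt_iff_le_not_ge]
  refine ⟨Or.inl h.le, fun hc => ?_⟩
  rcases (hc : pstarLE I (some q) (some p)) with h2 | ⟨hq, hp⟩
  · exact absurd (le_antisymm h.le h2) h.ne
  · exact hp (hI q hq p h.le)

lemma pstar_lt_of_mem {p q : α} (hp : p ∈ I) (hq : q ∉ I) :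
    (pstarOrder I hI).lt (some p) (some q) := by
  letI := pstarOrder I hI
  rw [lt_iff_le_not_ge]
  refine ⟨Or.inr ⟨hp, hq⟩, fun hc => ?_⟩
  rcases (hc : pstarLE I (some q) (some p)) with h2 | ⟨hq2, _⟩
  · exact hq (hI p hp q h2)
  · exact hq hq2

end PStar

section Count

lemma card_srpp_inj (Q : Type*) [Fintype Q] [PartialOrder Q] (m : ℕ) :
    ((srpp Q m).filter fun g => Function.Injective g).card
      = (linExts Q).card * (m + 1).choose (Fintype.card Q) := by
  classical
  have hcard : ((linExts Q) ×ˢ ((univ : Finset (Fin (m+1))).powersetCard (Fintype.card Q))).card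
      = (linExts Q).card * (m + 1).choose (Fintype.card Q) := by
    rw [Finset.card_product, Finset.card_powersetCard, Finset.card_univ, Fintype.card_fin]
  rw [← hcard]
  refine (Finset.card_bij
    (fun x hx => fun p =>
      ((x.2.orderIsoOfFin (Finset.mem_powersetCard.1 (Finset.mem_product.1 hx).2).2 (x.1 p) :
        {y // y ∈ x.2}) : Fin (m+1)))
    ?_ ?_ ?_).symm
  · -- maps into filter
    rintro ⟨e, V⟩ hx
    have he : e ∈ linExts Q := (Finset.mem_product.1 hx).1
    have hV := (Finset.mem_powersetCard.1 (Finset.mem_product.1 hx).2).2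
    rw [Finset.mem_filter]
    constructor
    · rw [mem_srpp']
      intro p q hpq
      exact Subtype.coe_lt_coe.2 ((V.orderIsoOfFin hV).strictMono (linExt_strict he hpq))
    · intro a b hab
      exact e.injective ((V.orderIsoOfFin hV).injective (Subtype.coe_injective hab))
  · -- injective
    rintro ⟨e₁, V₁⟩ hx₁ ⟨e₂, V₂⟩ hx₂ hfun
    have himg : ∀ (e : Q ≃ Fin (Fintype.card Q)) (V : Finset (Fin (m+1)))
        (hV : V.card = Fintype.card Q),
        univ.image (fun p => ((V.orderIsoOfFin hV (e p) : {y // y ∈ V}) : Fin (m+1))) = V := by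
      intro e V hV
      ext y
      simp only [Finset.mem_image, Finset.mem_univ, true_and]
      constructor
      · rintro ⟨p, rfl⟩
        exact (V.orderIsoOfFin hV (e p)).2
      · intro hy
        refine ⟨e.symm ((V.orderIsoOfFin hV).symm ⟨y, hy⟩), ?_⟩
        rw [e.apply_symm_apply, OrderIso.apply_symm_apply]
    have hV₁ := (Finset.mem_powersetCard.1 (Finset.mem_product.1 hx₁).2).2
    have hV₂ := (Finset.mem_powersetCard.1 (Finset.mem_product.1 hx₂).2).2
    have hVeq : V₁ = V₂ := by
      rw [← himg e₁ V₁ hV₁, ← himg e₂ V₂ hV₂]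
      simp only at hfun
      rw [hfun]
    subst hVeq
    have heq : e₁ = e₂ := by
      refine Equiv.ext fun p => ?_
      have := congrFun hfun p
      simp only at this
      exact (V₁.orderIsoOfFin hV₁).injective (Subtype.coe_injective this)
    rw [heq]
  · -- surjective
    intro g hg
    have hstrict := mem_srpp'.1 (Finset.mem_filter.1 hg).1
    have hinj : Function.Injective g := (Finset.mem_filter.1 hg).2
    set V : Finset (Fin (m+1)) := univ.image g with hVdef
    have hVcard : V.card = Fintype.card Q := by
      rw [hVdef, Finset.card_image_of_injective _ hinj, Finset.card_univ]
    have hgm : ∀ p, g p ∈ V := fun p => Finset.mem_image_of_mem g (Finset.mem_univ p)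
    set f : Q → Fin (Fintype.card Q) :=
      fun p => (V.orderIsoOfFin hVcard).symm ⟨g p, hgm p⟩ with hfdef
    have hfinj : Function.Injective f := by
      intro a b hab
      apply hinj
      have := (V.orderIsoOfFin hVcard).symm.injective hab
      exact congrArg Subtype.val this
    have hfbij : Function.Bijective f :=
      (Fintype.bijective_iff_injective_and_card f).2 ⟨hfinj, by simp⟩
    set e : Q ≃ Fin (Fintype.card Q) := Equiv.ofBijective f hfbij with hedef
    have he : e ∈ linExts Q := by
      rw [mem_linExts']
      intro p q hpq
      rcases eq_or_lt_of_le hpq with rfl | hlt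
      · exact le_refl _
      · exact ((V.orderIsoOfFin hVcard).symm.monotone
          (Subtype.mk_le_mk.2 (hstrict p q hlt).le))
    have hVmem : V ∈ (univ : Finset (Fin (m+1))).powersetCard (Fintype.card Q) :=
      Finset.mem_powersetCard.2 ⟨Finset.subset_univ V, hVcard⟩
    refine ⟨(e, V), Finset.mem_product.2 ⟨he, hVmem⟩, ?_⟩
    funext p
    show ((V.orderIsoOfFin _ (e p) : {y // y ∈ V}) : Fin (m+1)) = g p
    have : e p = f p := rfl
    rw [this, hfdef]
    simp only [OrderIso.apply_symm_apply]

end Count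

section NonInj

lemma card_srpp_noninj_le (Q : Type*) [Fintype Q] [PartialOrder Q] (m : ℕ) :
    ((srpp Q m).filter fun g => ¬ Function.Injective g).card
      ≤ (Fintype.card Q)^2 * (m+1)^(Fintype.card Q - 1) := by
  classical
  have hsub : ((srpp Q m).filter fun g => ¬ Function.Injective g)
      ⊆ (univ : Finset Q).offDiag.biUnion (fun pq : Q × Q =>
          (univ : Finset (Q → Fin (m+1))).filter fun g => g pq.1 = g pq.2) := by
    intro g hg
    have hni := (Finset.mem_filter.1 hg).2
    rw [Function.not_injective_iff] at hni
    obtain ⟨a, b, hab, hne⟩ := hni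
    exact Finset.mem_biUnion.2 ⟨(a, b),
      Finset.mem_offDiag.2 ⟨Finset.mem_univ _, Finset.mem_univ _, hne⟩,
      Finset.mem_filter.2 ⟨Finset.mem_univ _, hab⟩⟩
  refine (Finset.card_le_card hsub).trans (Finset.card_biUnion_le.trans ?_)
  have hbound : ∀ pq ∈ (univ : Finset Q).offDiag,
      ((univ : Finset (Q → Fin (m+1))).filter fun g => g pq.1 = g pq.2).card
        ≤ (m+1)^(Fintype.card Q - 1) := by
    rintro ⟨a, b⟩ hab
    have hne : a ≠ b := (Finset.mem_offDiag.1 hab).2.2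
    have hcard : Fintype.card {x : Q // ¬ x = a} = Fintype.card Q - 1 := by
      rw [Fintype.card_subtype_compl, Fintype.card_subtype_eq]
    calc ((univ : Finset (Q → Fin (m+1))).filter fun g => g a = g b).card
        ≤ (univ : Finset ({x : Q // ¬ x = a} → Fin (m+1))).card := by
          apply Finset.card_le_card_of_injOn (fun g => fun x => g x.1)
          · intro g _; exact Finset.mem_univ _
          · intro g₁ hg₁ g₂ hg₂ h
            have h1 := (Finset.mem_filter.1 hg₁).2
            have h2 := (Finset.mem_filter.1 hg₂).2
            funext x
            by_cases hx : x = a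
            · subst hx
              have hb : ¬ b = x := fun hc => hne hc.symm
              have := congrFun h ⟨b, hb⟩
              simp only at this
              rw [h1, h2]
              exact this
            · exact congrFun h ⟨x, hx⟩
      _ = (m+1)^(Fintype.card Q - 1) := by
          rw [Finset.card_univ, Fintype.card_fun, Fintype.card_fin, hcard]
  calc (∑ pq ∈ (univ : Finset Q).offDiag,
        ((univ : Finset (Q → Fin (m+1))).filter fun g => g pq.1 = g pq.2).card)
      ≤ ∑ _pq ∈ (univ : Finset Q).offDiag, (m+1)^(Fintype.card Q - 1) :=
        Finset.sum_le_sum hbound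
    _ ≤ (Fintype.card Q)^2 * (m+1)^(Fintype.card Q - 1) := by
        rw [Finset.sum_const, smul_eq_mul]
        apply Nat.mul_le_mul_right
        rw [Finset.offDiag_card, Finset.card_univ, ← sq]
        omega

end NonInj

section Asymptotics

open Filter

lemma choose_div_tendsto (q : ℕ) :
    Tendsto (fun m : ℕ => ((m+1).choose q : ℝ) / ((m:ℝ)+1)^q) atTop
      (nhds (1 / q.factorial)) := by
  have hprod : Tendsto (fun m : ℕ => ∏ i ∈ Finset.range q, (1 - (i:ℝ)/((m:ℝ)+1)))
      atTop (nhds 1) := by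
    have h1 : Tendsto (fun m : ℕ => ∏ i ∈ Finset.range q, (1 - (i:ℝ)/((m:ℝ)+1)))
        atTop (nhds (∏ _i ∈ Finset.range q, (1:ℝ))) := by
      apply tendsto_finset_prod
      intro i _
      have h0 : Tendsto (fun m : ℕ => (i:ℝ)/((m:ℝ)+1)) atTop (nhds 0) := by
        have := tendsto_one_div_add_atTop_nhds_zero_nat.const_mul (i:ℝ)
        simpa [div_eq_mul_inv] using this
      have := (tendsto_const_nhds (x := (1:ℝ)) (f := atTop)).sub h0
      simpa using this
    simpa using h1
  have hg : Tendsto (fun m : ℕ =>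
      (∏ i ∈ Finset.range q, (1 - (i:ℝ)/((m:ℝ)+1))) / q.factorial)
      atTop (nhds (1 / q.factorial)) := hprod.div_const _
  apply hg.congr' _
  filter_upwards [eventually_ge_atTop q] with m hm
  have hm1 : (0:ℝ) < (m:ℝ)+1 := by positivity
  have hd : (((m+1).descFactorial q : ℕ) : ℝ) = ∏ i ∈ Finset.range q, ((m:ℝ)+1 - i) := by
    rw [Nat.descFactorial_eq_prod_range, Nat.cast_prod]
    apply Finset.prod_congr rfl
    intro i hi
    have hi' : i ≤ m + 1 := by
      have := Finset.mem_range.1 hi; omega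
    rw [Nat.cast_sub hi']
    push_cast; ring
  have hchoose : (((m+1).choose q : ℕ) : ℝ) = (((m+1).descFactorial q : ℕ) : ℝ) / q.factorial := by
    have := Nat.descFactorial_eq_factorial_mul_choose (m+1) q
    have hcast : (((m+1).descFactorial q : ℕ) : ℝ) = (q.factorial : ℝ) * ((m+1).choose q) := by
      rw [this]; push_cast; ring
    rw [hcast]
    field_simp
  have h1 : ∏ i ∈ Finset.range q, (1 - (i:ℝ)/((m:ℝ)+1))
      = (∏ i ∈ Finset.range q, ((m:ℝ)+1 - i)) / ((m:ℝ)+1)^q := by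
    have hc : ((m:ℝ)+1)^q = ∏ _i ∈ Finset.range q, ((m:ℝ)+1) := by
      rw [Finset.prod_const, Finset.card_range]
    rw [hc, ← Finset.prod_div_distrib]
    apply Finset.prod_congr rfl
    intro i _
    field_simp
  rw [h1, hchoose, hd, div_div, div_div, mul_comm]

lemma tendsto_card_srpp (Q : Type*) [Fintype Q] [PartialOrder Q] :
    Tendsto (fun m : ℕ => ((srpp Q m).card : ℝ) / ((m:ℝ)+1)^(Fintype.card Q)) atTop
      (nhds (((linExts Q).card : ℝ) / (Fintype.card Q).factorial)) := by
  classical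
  set q := Fintype.card Q with hq
  set L := (linExts Q).card with hL
  have hsplit : ∀ m : ℕ, ((srpp Q m).card : ℝ)
      = (L : ℝ) * ((m+1).choose q : ℝ)
        + (((srpp Q m).filter fun g => ¬ Function.Injective g).card : ℝ) := by
    intro m
    have h := Finset.card_filter_add_card_filter_not
      (s := srpp Q m) (p := fun g => Function.Injective g)
    rw [card_srpp_inj Q m] at h
    have := congrArg (fun x : ℕ => (x : ℝ)) h
    push_cast at this ⊢
    linarith [this]
  have hb : Tendsto (fun m : ℕ =>
      (((srpp Q m).filter fun g => ¬ Function.Injective g).card : ℝ) / ((m:ℝ)+1)^q)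
      atTop (nhds 0) := by
    apply squeeze_zero (g := fun m : ℕ => (q:ℝ)^2 / ((m:ℝ)+1))
    · intro m; positivity
    · intro m
      have hble : (((srpp Q m).filter fun g => ¬ Function.Injective g).card : ℝ)
          ≤ (q:ℝ)^2 * ((m:ℝ)+1)^(q-1) := by
        have := card_srpp_noninj_le Q m
        have hcast := congrArg (fun x : ℕ => (x : ℝ)) (rfl : (q^2 * (m+1)^(q-1)) = q^2 * (m+1)^(q-1))
        calc (((srpp Q m).filter fun g => ¬ Function.Injective g).card : ℝ)
            ≤ ((q^2 * (m+1)^(q-1) : ℕ) : ℝ) := by exact_mod_cast this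
          _ = (q:ℝ)^2 * ((m:ℝ)+1)^(q-1) := by push_cast; ring
      rcases Nat.eq_zero_or_pos q with hq0 | hq1
      · have hz : (((srpp Q m).filter fun g => ¬ Function.Injective g).card : ℝ) = 0 := by
          have : (((srpp Q m).filter fun g => ¬ Function.Injective g).card : ℝ) ≤ 0 := by
            rw [hq0] at hble; simpa using hble
          have h0 : (0:ℝ) ≤ (((srpp Q m).filter fun g => ¬ Function.Injective g).card : ℝ) := by
            positivity
          linarith
        rw [hz, zero_div]
        positivity
      · have hpow : ((m:ℝ)+1)^q = ((m:ℝ)+1) * ((m:ℝ)+1)^(q-1) := by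
          rw [← pow_succ']
          congr 1
          omega
        have hmpos : (0:ℝ) < (m:ℝ)+1 := by positivity
        have hppos : (0:ℝ) < ((m:ℝ)+1)^(q-1) := by positivity
        rw [hpow]
        rw [div_le_div_iff₀ (by positivity) hmpos]
        calc (((srpp Q m).filter fun g => ¬ Function.Injective g).card : ℝ) * ((m:ℝ)+1)
            ≤ ((q:ℝ)^2 * ((m:ℝ)+1)^(q-1)) * ((m:ℝ)+1) := by
              apply mul_le_mul_of_nonneg_right hble (le_of_lt hmpos)
          _ = (q:ℝ)^2 * (((m:ℝ)+1) * ((m:ℝ)+1)^(q-1)) := by ring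
    · have := tendsto_one_div_add_atTop_nhds_zero_nat.const_mul ((q:ℝ)^2)
      simpa [div_eq_mul_inv] using this
  have h1 : Tendsto (fun m : ℕ => (L:ℝ) * (((m+1).choose q : ℝ) / ((m:ℝ)+1)^q))
      atTop (nhds ((L:ℝ) * (1 / q.factorial))) := (choose_div_tendsto q).const_mul _
  have hsum := h1.add hb
  have hval : (L:ℝ) * (1 / q.factorial) + 0 = (L:ℝ) / q.factorial := by ring
  rw [hval] at hsum
  apply hsum.congr
  intro m
  rw [hsplit m, add_div, mul_div_assoc]

end Asymptotics

section BijA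

/-- The map sending a pair (strict partition, cut position) to a strict partition of `P*`. -/
def toPstarFun (I : Finset α) (m : ℕ) (ℓ : α → Fin (m+1)) (k : ℕ) (hk : k < m+2) :
    Option α → Fin (m+2)
  | none => ⟨k, hk⟩
  | some p =>
    if p ∈ I then ⟨(ℓ p : ℕ), Nat.lt_succ_of_lt (ℓ p).isLt⟩
    else ⟨(ℓ p : ℕ) + 1, Nat.succ_lt_succ (ℓ p).isLt⟩

lemma numerator_card (I : Finset α) (hI : IsIdeal I) (m : ℕ) :
    ((srpp α m ×ˢ Finset.range (m+2)).filter fun x =>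
        Finset.univ.filter (fun p => ((x.1 p : ℕ)) < x.2) = I).card
      = (@srpp (Option α) _ (pstarOrder I hI) (m+1)).card := by
  classical
  letI := pstarOrder I hI
  refine Finset.card_bij (fun x hx => toPstarFun I m x.1 x.2
    (Finset.mem_range.1 (Finset.mem_product.1 (Finset.mem_filter.1 hx).1).2)) ?_ ?_ ?_
  · -- maps into srpp of P*
    rintro ⟨ℓ, k⟩ hx
    obtain ⟨hmem, hcut⟩ := Finset.mem_filter.1 hx
    obtain ⟨hℓ, _⟩ := Finset.mem_product.1 hmem
    have hstrict := mem_srpp'.1 hℓ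
    have hio : ∀ p : α, p ∈ I ↔ (ℓ p : ℕ) < k := by
      intro p
      rw [← hcut]
      simp
    rw [mem_srpp']
    intro y z hyz
    have hne : y ≠ z := ne_of_lt hyz
    have hle : pstarLE I y z := le_of_lt hyz
    rw [Fin.lt_def]
    cases y with
    | none =>
      cases z with
      | none => exact absurd rfl hne
      | some q =>
        have hq : q ∉ I := hle
        have hkq : ¬ ((ℓ q : ℕ) < k) := fun hc => hq ((hio q).2 hc)
        simp only [toPstarFun, if_neg hq]
        omega
    | some p =>
      cases z with
      | none =>
        have hp : p ∈ I := hle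
        have hpk := (hio p).1 hp
        simp only [toPstarFun, if_pos hp]
        omega
      | some q =>
        have hpq : p ≠ q := fun hc => hne (by rw [hc])
        rcases (hle : p ≤ q ∨ (p ∈ I ∧ q ∉ I)) with h | ⟨hp, hq⟩
        · have hlt : p < q := lt_of_le_of_ne h hpq
          have hv : (ℓ p : ℕ) < (ℓ q : ℕ) := hstrict p q hlt
          by_cases hp : p ∈ I
          · by_cases hq : q ∈ I
            · simp only [toPstarFun, if_pos hp, if_pos hq]; omega
            · simp only [toPstarFun, if_pos hp, if_neg hq]; omega
          · by_cases hq : q ∈ I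
            · exact absurd (hI q hq p hlt.le) hp
            · simp only [toPstarFun, if_neg hp, if_neg hq]; omega
        · have h1 := (hio p).1 hp
          have h2 : ¬ ((ℓ q : ℕ) < k) := fun hc => hq ((hio q).2 hc)
          simp only [toPstarFun, if_pos hp, if_neg hq]
          omega
  · -- injective
    rintro ⟨ℓ₁, k₁⟩ hx₁ ⟨ℓ₂, k₂⟩ hx₂ hfun
    have hnone := congrFun hfun none
    simp only [toPstarFun, Fin.mk.injEq] at hnone
    have hk : k₁ = k₂ := hnone
    have hℓ : ℓ₁ = ℓ₂ := by
      funext p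
      have hsome := congrFun hfun (some p)
      by_cases hp : p ∈ I
      · simp only [toPstarFun, if_pos hp, Fin.mk.injEq] at hsome
        exact Fin.ext hsome
      · simp only [toPstarFun, if_neg hp, Fin.mk.injEq] at hsome
        exact Fin.ext (by omega)
    rw [hk, hℓ]
  · -- surjective
    intro G hG
    have hGs := mem_srpp'.1 hG
    have hlt : ∀ p ∈ I, (G (some p) : ℕ) < (G none : ℕ) := by
      intro p hp
      exact Fin.lt_def.1 (hGs _ _ (pstar_lt_some_none I hI hp))
    have hgt : ∀ p ∉ I, (G none : ℕ) < (G (some p) : ℕ) := by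
      intro p hp
      exact Fin.lt_def.1 (hGs _ _ (pstar_lt_none_some I hI hp))
    set k : ℕ := (G none : ℕ) with hkdef
    set ℓ : α → Fin (m+1) := fun p =>
      if hp : p ∈ I then ⟨(G (some p) : ℕ), by
        have := hlt p hp; have := (G none).isLt; omega⟩
      else ⟨(G (some p) : ℕ) - 1, by
        have := (G (some p)).isLt; have := hgt p hp; omega⟩ with hℓdef
    have hℓmem : ℓ ∈ srpp α m := by
      rw [mem_srpp']
      intro p q hpq
      have hv := Fin.lt_def.1 (hGs _ _ (pstar_lt_of_lt I hI hpq))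
      rw [Fin.lt_def]
      by_cases hp : p ∈ I
      · by_cases hq : q ∈ I
        · simp only [hℓdef, dif_pos hp, dif_pos hq]; omega
        · have h1 := hlt p hp; have h2 := hgt q hq
          simp only [hℓdef, dif_pos hp, dif_neg hq]; omega
      · by_cases hq : q ∈ I
        · exact absurd (hI q hq p hpq.le) hp
        · have h1 := hgt p hp
          simp only [hℓdef, dif_neg hp, dif_neg hq]; omega
    have hkmem : k ∈ Finset.range (m+2) := Finset.mem_range.2 (G none).isLt
    have hcut : Finset.univ.filter (fun p => ((ℓ p : ℕ)) < k) = I := by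
      ext p
      simp only [Finset.mem_filter, Finset.mem_univ, true_and]
      by_cases hp : p ∈ I
      · simp only [hℓdef, dif_pos hp]
        exact ⟨fun _ => hp, fun _ => hlt p hp⟩
      · have h1 := hgt p hp
        simp only [hℓdef, dif_neg hp]
        constructor
        · intro hc; omega
        · intro hc; exact absurd hc hp
    refine ⟨(ℓ, k), Finset.mem_filter.2 ⟨Finset.mem_product.2 ⟨hℓmem, hkmem⟩, hcut⟩, ?_⟩
    funext y
    cases y with
    | none => exact Fin.ext rfl
    | some p =>
      by_cases hp : p ∈ I
      · simp only [toPstarFun, if_pos hp, hℓdef, dif_pos hp]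
      · have h1 := hgt p hp
        simp only [toPstarFun, if_neg hp, hℓdef, dif_neg hp]
        exact Fin.ext (by simp; omega)

end BijA

section BijC

/-- Extend a linear extension of `α` to a function on `Option α`, inserting the extra
element at position `I.card`. -/
def extendFun (I : Finset α) (e : α ≃ Fin (Fintype.card α)) : Option α → Fin (Fintype.card α + 1)
  | none => ⟨I.card, Nat.lt_succ_of_le (by rw [← Finset.card_univ]; exact Finset.card_le_univ I)⟩
  | some p => if p ∈ I then Fin.castSucc (e p) else (e p).succ

lemma extendFun_bijective (I : Finset α) (e : α ≃ Fin (Fintype.card α))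
    (hcut : Finset.univ.filter (fun p => (e p : ℕ) < I.card) = I) :
    Function.Bijective (extendFun I e) := by
  classical
  have hio : ∀ p : α, p ∈ I ↔ (e p : ℕ) < I.card := by
    intro p; conv_lhs => rw [← hcut]
    simp
  have hinj : Function.Injective (extendFun I e) := by
    intro x y hxy
    cases x with
    | none =>
      cases y with
      | none => rfl
      | some q =>
        exfalso
        by_cases hq : q ∈ I
        · have h1 := (hio q).1 hq
          simp only [extendFun, if_pos hq] at hxy
          have := congrArg Fin.val hxy
          simp at this
          omega
        · have h1 : ¬ ((e q : ℕ) < I.card) := fun hc => hq ((hio q).2 hc)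
          simp only [extendFun, if_neg hq] at hxy
          have := congrArg Fin.val hxy
          simp at this
          omega
    | some p =>
      cases y with
      | none =>
        exfalso
        by_cases hp : p ∈ I
        · have h1 := (hio p).1 hp
          simp only [extendFun, if_pos hp] at hxy
          have := congrArg Fin.val hxy
          simp at this
          omega
        · have h1 : ¬ ((e p : ℕ) < I.card) := fun hc => hp ((hio p).2 hc)
          simp only [extendFun, if_neg hp] at hxy
          have := congrArg Fin.val hxy
          simp at this
          omega
      | some q =>
        have hval := congrArg Fin.val hxy
        by_cases hp : p ∈ I <;> by_cases hq : q ∈ I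
        · simp only [extendFun, if_pos hp, if_pos hq] at hval
          simp at hval
          exact congrArg some (e.injective (Fin.ext hval))
        · have h1 := (hio p).1 hp
          have h2 : ¬ ((e q : ℕ) < I.card) := fun hc => hq ((hio q).2 hc)
          simp only [extendFun, if_pos hp, if_neg hq] at hval
          simp at hval
          omega
        · have h1 := (hio q).1 hq
          have h2 : ¬ ((e p : ℕ) < I.card) := fun hc => hp ((hio p).2 hc)
          simp only [extendFun, if_neg hp, if_pos hq] at hval
          simp at hval
          omega
        · simp only [extendFun, if_neg hp, if_neg hq] at hval
          simp at hval
          exact congrArg some (e.injective (Fin.ext hval))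
  exact (Fintype.bijective_iff_injective_and_card _).2 ⟨hinj, by simp⟩

lemma card_linExts_pstar (I : Finset α) (hI : IsIdeal I) :
    (@linExts (Option α) _ (pstarOrder I hI)).card
      = ((linExts α).filter fun e =>
          Finset.univ.filter (fun p => (e p : ℕ) < I.card) = I).card := by
  classical
  letI := pstarOrder I hI
  have hn1 : Fintype.card α + 1 = Fintype.card (Option α) := (Fintype.card_option).symm
  refine (Finset.card_bij (fun e he =>
    ((Equiv.ofBijective (extendFun I e)
        (extendFun_bijective I e (Finset.mem_filter.1 he).2)).trans (finCongr hn1))) ?_ ?_ ?_).symm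
  · -- maps into linExts of P*
    rintro e he
    obtain ⟨hel, hcut⟩ := Finset.mem_filter.1 he
    have hmono := mem_linExts'.1 hel
    have hio : ∀ p : α, p ∈ I ↔ (e p : ℕ) < I.card := by
      intro p; conv_lhs => rw [← hcut]
      simp
    rw [mem_linExts']
    intro y z hyz
    rw [Fin.le_def]
    simp only [Equiv.trans_apply, Equiv.ofBijective_apply, finCongr_apply, Fin.coe_cast]
    cases y with
    | none =>
      cases z with
      | none => exact le_refl _
      | some q =>
        have hq : q ∉ I := hyz
        have h1 : ¬ ((e q : ℕ) < I.card) := fun hc => hq ((hio q).2 hc)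
        simp only [extendFun, if_neg hq]
        simp
        omega
    | some p =>
      cases z with
      | none =>
        have hp : p ∈ I := hyz
        have h1 := (hio p).1 hp
        simp only [extendFun, if_pos hp]
        simp
        omega
      | some q =>
        rcases (hyz : p ≤ q ∨ (p ∈ I ∧ q ∉ I)) with h | ⟨hp, hq⟩
        · have hv : (e p : ℕ) ≤ (e q : ℕ) := hmono p q h
          by_cases hp : p ∈ I <;> by_cases hq : q ∈ I
          · simp only [extendFun, if_pos hp, if_pos hq]; simp; omega
          · simp only [extendFun, if_pos hp, if_neg hq]; simp; omega
          · exact absurd (hI q hq p h) hp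
          · simp only [extendFun, if_neg hp, if_neg hq]; simp; omega
        · have h1 := (hio p).1 hp
          have h2 : ¬ ((e q : ℕ) < I.card) := fun hc => hq ((hio q).2 hc)
          simp only [extendFun, if_pos hp, if_neg hq]
          simp
          omega
  · -- injective
    intro e₁ he₁ e₂ he₂ hfun
    have hext : ∀ x, extendFun I e₁ x = extendFun I e₂ x := by
      intro x
      have := congrFun (congrArg (fun (E : Option α ≃ Fin (Fintype.card (Option α))) =>
        (E : Option α → Fin (Fintype.card (Option α)))) hfun) x
      simp only [Equiv.trans_apply, Equiv.ofBijective_apply, finCongr_apply] at this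
      exact Fin.ext (by
        have := congrArg Fin.val this
        simpa using this)
    refine Equiv.ext fun p => ?_
    have h := hext (some p)
    by_cases hp : p ∈ I
    · simp only [extendFun, if_pos hp] at h
      exact Fin.castSucc_injective _ h
    · simp only [extendFun, if_neg hp] at h
      exact Fin.succ_injective _ h
  · -- surjective
    intro E hE
    have hmono := mem_linExts'.1 hE
    have hlt : ∀ p ∈ I, (E (some p) : ℕ) < (E none : ℕ) := fun p hp =>
      Fin.lt_def.1 (linExt_strict hE (pstar_lt_some_none I hI hp))
    have hgt : ∀ p ∉ I, (E none : ℕ) < (E (some p) : ℕ) := fun p hp =>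
      Fin.lt_def.1 (linExt_strict hE (pstar_lt_none_some I hI hp))
    -- E none = I.card
    have hval : (E none : ℕ) = I.card := by
      have hfilter : (Finset.univ.filter (fun x : Option α => (E x : ℕ) < (E none : ℕ)))
          = I.image some := by
        ext x
        simp only [Finset.mem_filter, Finset.mem_univ, true_and]
        cases x with
        | none => simp
        | some p =>
          simp only [Finset.mem_image]
          constructor
          · intro hc
            by_cases hp : p ∈ I
            · exact ⟨p, hp, rfl⟩
            · have := hgt p hp; omega
          · rintro ⟨q, hq, hqe⟩
            obtain rfl : q = p := Option.some.inj hqe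
            exact hlt q hq
      have h1 := card_filter_equiv_lt E ((E none : ℕ)) (le_of_lt (E none).isLt)
      rw [hfilter] at h1
      rw [Finset.card_image_of_injective _ (Option.some_injective α)] at h1
      omega
    have hnlt : ∀ p : α, (E (some p) : ℕ) < Fintype.card (Option α) := fun p => (E (some p)).isLt
    have hcardo : Fintype.card (Option α) = Fintype.card α + 1 := Fintype.card_option
    set f : α → Fin (Fintype.card α) := fun p =>
      if hp : p ∈ I then ⟨(E (some p) : ℕ), by
        have h1 := hlt p hp
        have h2 := (E none).isLt
        have h3 : I.card ≤ Fintype.card α := by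
          rw [← Finset.card_univ]; exact Finset.card_le_univ I
        omega⟩
      else ⟨(E (some p) : ℕ) - 1, by
        have h1 := hgt p hp
        have h2 := hnlt p
        have h4 : 0 < Fintype.card α := Fintype.card_pos_iff.2 ⟨p⟩
        omega⟩ with hfdef
    have hfinj : Function.Injective f := by
      intro p q hpq
      have hv := congrArg Fin.val hpq
      by_cases hp : p ∈ I <;> by_cases hq : q ∈ I
      · simp only [hfdef, dif_pos hp, dif_pos hq] at hv
        exact Option.some.inj (E.injective (Fin.ext hv))
      · have h1 := hlt p hp; have h2 := hgt q hq
        simp only [hfdef, dif_pos hp, dif_neg hq] at hv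
        omega
      · have h1 := hgt p hp; have h2 := hlt q hq
        simp only [hfdef, dif_neg hp, dif_pos hq] at hv
        omega
      · have h1 := hgt p hp; have h2 := hgt q hq
        simp only [hfdef, dif_neg hp, dif_neg hq] at hv
        have : (E (some p) : ℕ) = (E (some q) : ℕ) := by omega
        exact Option.some.inj (E.injective (Fin.ext this))
    set e : α ≃ Fin (Fintype.card α) :=
      Equiv.ofBijective f ((Fintype.bijective_iff_injective_and_card f).2 ⟨hfinj, by simp⟩)
      with hedef
    have hecut : Finset.univ.filter (fun p => (e p : ℕ) < I.card) = I := by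
      ext p
      simp only [Finset.mem_filter, Finset.mem_univ, true_and]
      have hep : e p = f p := rfl
      by_cases hp : p ∈ I
      · have h1 := hlt p hp
        rw [hep]
        simp only [hfdef, dif_pos hp]
        exact ⟨fun _ => hp, fun _ => by omega⟩
      · have h1 := hgt p hp
        rw [hep]
        simp only [hfdef, dif_neg hp]
        constructor
        · intro hc; omega
        · intro hc; exact absurd hc hp
    have hemem : e ∈ linExts α := by
      rw [mem_linExts']
      intro p q hpq
      have hv : (E (some p) : ℕ) ≤ (E (some q) : ℕ) := by
        have := hmono (some p) (some q) (Or.inl hpq)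
        exact Fin.le_def.1 this
      rw [Fin.le_def]
      have hep : e p = f p := rfl
      have heq : e q = f q := rfl
      rw [hep, heq]
      by_cases hp : p ∈ I <;> by_cases hq : q ∈ I
      · simp only [hfdef, dif_pos hp, dif_pos hq]; omega
      · have h1 := hlt p hp; have h2 := hgt q hq
        simp only [hfdef, dif_pos hp, dif_neg hq]; omega
      · exact absurd (hI q hq p hpq) hp
      · have h1 := hgt p hp; have h2 := hgt q hq
        simp only [hfdef, dif_neg hp, dif_neg hq]; omega
    refine ⟨e, Finset.mem_filter.2 ⟨hemem, hecut⟩, ?_⟩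
    refine Equiv.ext fun x => ?_
    apply Fin.ext
    simp only [Equiv.trans_apply, Equiv.ofBijective_apply, finCongr_apply, Fin.coe_cast]
    cases x with
    | none =>
      simp only [extendFun]
      exact hval.symm
    | some p =>
      have hep : e p = f p := rfl
      by_cases hp : p ∈ I
      · simp only [extendFun, if_pos hp, Fin.coe_castSucc, hep, hfdef, dif_pos hp]
      · have h1 := hgt p hp
        simp only [extendFun, if_neg hp, Fin.val_succ, hep, hfdef, dif_neg hp]
        omega

end BijC

section MuLinEq

lemma muLin_eq (I : Finset α) :
    muLin α I = (((linExts α).filter fun e =>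
        Finset.univ.filter (fun p => (e p : ℕ) < I.card) = I).card : ℝ)
      / ((linExts α).card * (Fintype.card α + 1)) := by
  classical
  unfold muLin
  congr 1
  have hIle : I.card ≤ Fintype.card α := by
    rw [← Finset.card_univ]; exact Finset.card_le_univ I
  have hinner : ∀ e ∈ linExts α,
      (∑ k ∈ Finset.range (Fintype.card α + 1),
        if Finset.univ.filter (fun p => (e p : ℕ) < k) = I then (1:ℝ) else 0)
      = if Finset.univ.filter (fun p => (e p : ℕ) < I.card) = I then (1:ℝ) else 0 := by
    intro e _
    apply Finset.sum_eq_single_of_mem I.card (Finset.mem_range.2 (Nat.lt_succ_of_le hIle))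
    intro k hk hkne
    rw [if_neg]
    intro hc
    apply hkne
    have hkcard := card_filter_equiv_lt e k (Nat.lt_succ_iff.1 (Finset.mem_range.1 hk))
    rw [hc] at hkcard
    omega
  rw [Finset.sum_congr rfl hinner, Finset.sum_boole]

end MuLinEq


/-- part of Proposition 2.8: the strict distributions `μ_{m,<}` converge
pointwise, as `m → ∞`, to the linear distribution `μ_lin`. -/
theorem muStrict_tendsto_muLin (α : Type*) [Fintype α] [PartialOrder α] :
    ∀ I ∈ idealsFinset α,
      Filter.Tendsto (fun m : ℕ => muStrict α m I) Filter.atTop (nhds (muLin α I)) := by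
  classical
  intro I hImem
  have hI : IsIdeal I := by
    have := Finset.mem_filter.1 hImem
    simpa [idealsFinset] using this.2
  letI := pstarOrder I hI
  set n := Fintype.card α with hn
  set L := (linExts α).card with hL
  set M := ((linExts α).filter fun e =>
      Finset.univ.filter (fun p => (e p : ℕ) < I.card) = I).card with hM
  have hLpos : 0 < L := Finset.card_pos.2 (linExts_nonempty α)
  -- the numerator of muStrict equals the number of strict partitions of P*
  have hnum : ∀ m : ℕ,
      (∑ ℓ ∈ srpp α m, ∑ k ∈ Finset.range (m+2),
        if Finset.univ.filter (fun p => (ℓ p : ℕ) < k) = I then (1:ℝ) else 0)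
      = ((@srpp (Option α) _ (pstarOrder I hI) (m+1)).card : ℝ) := by
    intro m
    have hdouble : (∑ ℓ ∈ srpp α m, ∑ k ∈ Finset.range (m+2),
        if Finset.univ.filter (fun p => (ℓ p : ℕ) < k) = I then (1:ℝ) else 0)
        = ∑ x ∈ (srpp α m ×ˢ Finset.range (m+2)),
            if Finset.univ.filter (fun p => ((x.1 p : ℕ)) < x.2) = I then (1:ℝ) else 0 := by
      rw [Finset.sum_product]
    rw [hdouble, Finset.sum_boole]
    norm_cast
    exact numerator_card I hI m
  have hmu : ∀ m : ℕ, muStrict α m I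
      = ((@srpp (Option α) _ (pstarOrder I hI) (m+1)).card : ℝ)
        / (((srpp α m).card : ℝ) * ((m:ℝ)+2)) := by
    intro m
    unfold muStrict
    rw [hnum m]
  -- limits of the three pieces
  have hA : Filter.Tendsto (fun m : ℕ =>
      ((@srpp (Option α) _ (pstarOrder I hI) (m+1)).card : ℝ) / ((m:ℝ)+2)^(n+1))
      Filter.atTop (nhds ((M : ℝ) / (n+1).factorial)) := by
    have h0 := tendsto_card_srpp (Option α)
    rw [card_linExts_pstar I hI] at h0
    rw [Fintype.card_option] at h0
    have h1 := h0.comp (Filter.tendsto_add_atTop_nat 1)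
    refine h1.congr (fun m => ?_)
    have hcst : ((((m+1):ℕ):ℝ)+1) = (m:ℝ)+2 := by push_cast; ring
    simp only [Function.comp]
    rw [hcst]
  have hB : Filter.Tendsto (fun m : ℕ => ((srpp α m).card : ℝ) / ((m:ℝ)+1)^n)
      Filter.atTop (nhds ((L : ℝ) / n.factorial)) := tendsto_card_srpp α
  have hD : Filter.Tendsto (fun m : ℕ => (((m:ℝ)+1)/((m:ℝ)+2))^n)
      Filter.atTop (nhds 1) := by
    have hq : Filter.Tendsto (fun m : ℕ => ((m:ℝ)+1)/((m:ℝ)+2)) Filter.atTop (nhds 1) := by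
      have hz : Filter.Tendsto (fun m : ℕ => 1/((m:ℝ)+2)) Filter.atTop (nhds 0) := by
        have := (tendsto_one_div_add_atTop_nhds_zero_nat (𝕜 := ℝ)).comp (Filter.tendsto_add_atTop_nat 1)
        refine this.congr (fun m => ?_)
        simp only [Function.comp]
        push_cast
        ring
      have := (tendsto_const_nhds (x := (1:ℝ)) (f := Filter.atTop)).sub hz
      rw [sub_zero] at this
      refine this.congr (fun m => ?_)
      have hm2 : ((m:ℝ)+2) ≠ 0 := by positivity
      field_simp
      ring
    have := hq.pow n
    rwa [one_pow] at this
  have hfne : ((L : ℝ) / n.factorial * 1) ≠ 0 := by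
    have h1 : (0:ℝ) < L := by exact_mod_cast hLpos
    have h2 : (0:ℝ) < (n.factorial : ℝ) := by exact_mod_cast n.factorial_pos
    positivity
  have hfinal := hA.div (hB.mul hD) hfne
  -- identify the limit value with muLin
  have hvalue : ((M : ℝ) / (n+1).factorial) / ((L : ℝ) / n.factorial * 1) = muLin α I := by
    rw [muLin_eq I]
    rw [← hL, ← hM, ← hn]
    have hfact : (((n+1).factorial : ℕ) : ℝ) = ((n:ℝ)+1) * (n.factorial : ℝ) := by
      rw [Nat.factorial_succ]; push_cast; ring
    have h1 : ((L:ℝ)) ≠ 0 := by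
      have : (0:ℝ) < L := by exact_mod_cast hLpos
      linarith
    have h2 : ((n.factorial : ℕ):ℝ) ≠ 0 := by
      have : (0:ℝ) < (n.factorial : ℝ) := by exact_mod_cast n.factorial_pos
      linarith
    rw [mul_one, hfact]
    have h3 : ((n:ℝ)+1) ≠ 0 := by positivity
    field_simp
  rw [hvalue] at hfinal
  refine hfinal.congr (fun m => ?_)
  rw [hmu m]
  by_cases hc : ((srpp α m).card : ℝ) = 0
  · rw [hc]
    simp [div_zero, zero_mul, mul_zero, zero_div]
    have he : srpp α m = ∅ := by
      rw [← Finset.card_eq_zero]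
      exact_mod_cast hc
    exact Or.inr (Or.inl (Or.inl he))
  · have hm1 : ((m:ℝ)+1) ≠ 0 := by positivity
    have hm2 : ((m:ℝ)+2) ≠ 0 := by positivity
    rw [Pi.div_apply, div_pow]
    field_simp
    ring
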